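/- Let $R$ be a commutative ring and let $R\Delta_\bullet$ be the simplicial ring with $R\Delta_m = R\llbracket T_0,\ldots,T_m \rrbracket$ and structure maps $T_i \mapsto \sum_{j \in \sigma^{-1}(i)} T_j$ for $\sigma : [n] \to [m]$. Then the canonical map $R\Delta_\bullet \to R$ (to the constant simplicial ring $R$) induced by $T_i \mapsto 0$ is a trivial Kan fibration of simplicial sets. -/

import Mathlib

open CategoryTheory MvPowerSeries

open MvPowerSeries

namespace Stmt8

variable {R : Type} [CommRing R] {N : ℕ}

/-- degree of an exponent -/
def deg {N : ℕ} (a : Fin N →₀ ℕ) : ℕ := ∑ s, a s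

lemma deg_add (a b : Fin N →₀ ℕ) : deg (a + b) = deg a + deg b := by
  simp [deg, Finset.sum_add_distrib]

lemma deg_eq_zero {a : Fin N →₀ ℕ} (h : deg a = 0) : a = 0 := by
  ext s
  have := Finset.sum_eq_zero_iff.mp h s (Finset.mem_univ s)
  simpa using this

lemma constantCoeff_eq_zero_of_mem_span {x : MvPowerSeries (Fin N) R}
    (hx : x ∈ Ideal.span (Set.range (X : Fin N → MvPowerSeries (Fin N) R))) :
    constantCoeff (σ := Fin N) (R := R) x = 0 := by
  have h : Ideal.span (Set.range (X : Fin N → MvPowerSeries (Fin N) R)) ≤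
      RingHom.ker (constantCoeff (σ := Fin N) (R := R)) := by
    rw [Ideal.span_le]
    rintro _ ⟨s, rfl⟩
    simp [RingHom.mem_ker]
  exact h hx

lemma coeff_eq_zero_of_mem_pow :
    ∀ (l : ℕ) (x : MvPowerSeries (Fin N) R),
      x ∈ (Ideal.span (Set.range (X : Fin N → MvPowerSeries (Fin N) R))) ^ l →
      ∀ a : Fin N →₀ ℕ, deg a < l → MvPowerSeries.coeff a x = 0 := by
  intro l
  induction l with
  | zero => intro x _ a ha; omega
  | succ l ih =>
    intro x hx a ha
    rw [pow_succ] at hx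
    have key : ∀ b : Fin N →₀ ℕ, deg b < l + 1 → MvPowerSeries.coeff b x = 0 := by
      refine Submodule.mul_induction_on hx ?_ ?_
      · intro i hi j hj b hb
        classical
        rw [MvPowerSeries.coeff_mul]
        refine Finset.sum_eq_zero ?_
        rintro ⟨b₁, b₂⟩ hmem
        have hb12 : b₁ + b₂ = b := Finset.HasAntidiagonal.mem_antidiagonal.mp hmem
        by_cases h1 : deg b₁ < l
        · rw [ih i hi b₁ h1, zero_mul]
        · have hd : deg b₁ + deg b₂ = deg b := by rw [← deg_add, hb12]
          have h2 : deg b₂ = 0 := by omega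
          have : b₂ = 0 := deg_eq_zero h2
          subst this
          rw [MvPowerSeries.coeff_zero_eq_constantCoeff_apply,
            constantCoeff_eq_zero_of_mem_span hj, mul_zero]
      · intro x y hx hy b hb
        rw [map_add, hx b hb, hy b hb, add_zero]
    exact key a ha

end Stmt8

namespace Stmt8
variable {R : Type} [CommRing R] {N : ℕ}
open scoped Classical in
/-- the "quotient" by `X i` on the part supported at exponents whose coords `< i` vanish -/
noncomputable def quotX {N : ℕ} (x : MvPowerSeries (Fin N) R) (i : Fin N) :
    MvPowerSeries (Fin N) R :=
  fun b => if ∀ j < i, b j = 0 then MvPowerSeries.coeff (b + Finsupp.single i 1) x else 0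

open scoped Classical in
lemma coeff_quotX {N : ℕ} (x : MvPowerSeries (Fin N) R) (i : Fin N) (b : Fin N →₀ ℕ) :
    MvPowerSeries.coeff b (quotX x i) =
      if ∀ j < i, b j = 0 then MvPowerSeries.coeff (b + Finsupp.single i 1) x else 0 := rfl

lemma deg_single (i : Fin N) (n : ℕ) : deg (Finsupp.single i n) = n := by
  classical
  simp [deg, Finsupp.single_apply]

lemma mem_pow_of_coeff_eq_zero :
    ∀ (l : ℕ) (x : MvPowerSeries (Fin N) R),
      (∀ a : Fin N →₀ ℕ, deg a < l → MvPowerSeries.coeff a x = 0) →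
      x ∈ (Ideal.span (Set.range (X : Fin N → MvPowerSeries (Fin N) R))) ^ l := by
  intro l
  induction l with
  | zero => intro x _; simp [Ideal.one_eq_top]
  | succ l ih =>
    classical
    intro x hx
    have hdec : x = ∑ i, X i * quotX x i := by
      ext a
      rw [map_sum]
      by_cases ha : a = 0
      · subst ha
        rw [hx 0 (by simp [deg]), Finset.sum_eq_zero]
        intro i _
        exact MvPowerSeries.coeff_zero_X_mul _ _
      · have hsupp : a.support.Nonempty := Finsupp.support_nonempty_iff.mpr ha
        set i0 := a.support.min' hsupp with hi0
        have hi0mem : a i0 ≠ 0 := Finsupp.mem_support_iff.mp (a.support.min'_mem hsupp)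
        have hi0min : ∀ j < i0, a j = 0 := by
          intro j hj
          by_contra hne
          exact absurd (a.support.min'_le j (Finsupp.mem_support_iff.mpr hne)) (not_le.mpr hj)
        rw [Finset.sum_eq_single i0]
        · rw [MvPowerSeries.X_def, MvPowerSeries.coeff_monomial_mul,
            if_pos (Finsupp.single_le_iff.mpr (Nat.one_le_iff_ne_zero.mpr hi0mem))]
          rw [coeff_quotX, if_pos, tsub_add_cancel_of_le
            (Finsupp.single_le_iff.mpr (Nat.one_le_iff_ne_zero.mpr hi0mem)), one_mul]
          intro j hj
          rw [Finsupp.tsub_apply, hi0min j hj, Finsupp.single_apply, if_neg hj.ne']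
          rfl
        · intro i _ hne
          rw [MvPowerSeries.X_def, MvPowerSeries.coeff_monomial_mul]
          rcases lt_or_gt_of_ne hne with hlt | hgt
          · rw [if_neg]
            intro hle
            have := Finsupp.single_le_iff.mp hle
            rw [hi0min i hlt] at this
            omega
          · split_ifs with hle
            · rw [coeff_quotX, if_neg, mul_zero]
              intro hall
              have := hall i0 hgt
              rw [Finsupp.tsub_apply, Finsupp.single_apply, if_neg hne] at this
              omega
            · rfl
        · intro h; exact absurd (Finset.mem_univ i0) h
    rw [hdec, pow_succ']
    refine Ideal.sum_mem _ fun i _ => Ideal.mul_mem_mul (Ideal.subset_span ⟨i, rfl⟩) ?_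
    refine ih _ fun b hb => ?_
    rw [coeff_quotX]
    split_ifs with h
    · exact hx _ (by rw [deg_add, deg_single]; omega)
    · rfl


/-- insert a zero at position `i` -/
noncomputable def insF (i : Fin (N + 1)) (b : Fin N →₀ ℕ) : Fin (N + 1) →₀ ℕ :=
  Finsupp.equivFunOnFinite.symm (i.insertNth (0 : ℕ) ⇑b)

/-- delete position `i` -/
noncomputable def remF (i : Fin (N + 1)) (a : Fin (N + 1) →₀ ℕ) : Fin N →₀ ℕ :=
  Finsupp.equivFunOnFinite.symm (i.removeNth ⇑a)

lemma insF_apply (i : Fin (N + 1)) (b : Fin N →₀ ℕ) (j : Fin (N + 1)) :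
    insF i b j = Fin.insertNth (α := fun _ => ℕ) i 0 ⇑b j := rfl

lemma remF_apply (i : Fin (N + 1)) (a : Fin (N + 1) →₀ ℕ) (l : Fin N) :
    remF i a l = a (i.succAbove l) := rfl

lemma insF_self (i : Fin (N + 1)) (b : Fin N →₀ ℕ) : insF i b i = 0 := by
  rw [insF_apply, Fin.insertNth_apply_same]

lemma insF_succAbove (i : Fin (N + 1)) (b : Fin N →₀ ℕ) (l : Fin N) :
    insF i b (i.succAbove l) = b l := by
  rw [insF_apply, Fin.insertNth_apply_succAbove]

lemma remF_insF (i : Fin (N + 1)) (b : Fin N →₀ ℕ) : remF i (insF i b) = b := by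
  ext l
  rw [remF_apply, insF_succAbove]

lemma insF_remF {i : Fin (N + 1)} {a : Fin (N + 1) →₀ ℕ} (h : a i = 0) :
    insF i (remF i a) = a := by
  ext j
  show Fin.insertNth (α := fun _ => ℕ) i 0 (i.removeNth ⇑a) j = a j
  rw [← h, Fin.insertNth_self_removeNth]

lemma eq_insF_iff {i : Fin (N + 1)} {a : Fin (N + 1) →₀ ℕ} {b : Fin N →₀ ℕ} :
    a = insF i b ↔ a i = 0 ∧ remF i a = b := by
  constructor
  · rintro rfl
    exact ⟨insF_self i b, remF_insF i b⟩
  · rintro ⟨h1, rfl⟩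
    exact (insF_remF h1).symm

lemma deg_insF (i : Fin (N + 1)) (b : Fin N →₀ ℕ) : deg (insF i b) = deg b := by
  show (∑ j, insF i b j) = ∑ l, b l
  rw [Fin.sum_univ_succAbove (fun j => insF i b j) i, insF_self]
  simp only [insF_succAbove, zero_add]

/-- products of monomials -/
lemma prod_monomial (d : Fin N →₀ ℕ) :
    (∏ l : Fin N, (X l : MvPowerSeries (Fin N) R) ^ (d l)) = monomial d 1 := by
  simp_rw [X_pow_eq]
  have key : ∀ (s : Finset (Fin N)),
      (∏ l ∈ s, (monomial (Finsupp.single l (d l)) 1 : MvPowerSeries (Fin N) R)) =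
        monomial (∑ l ∈ s, Finsupp.single l (d l)) 1 := by
    intro s
    induction s using Finset.induction_on with
    | empty => simp [monomial_zero_one]
    | insert _ _ h ih =>
      rw [Finset.prod_insert h, Finset.sum_insert h, ih, monomial_mul_monomial, one_mul]
  rw [key, Finsupp.univ_sum_single]

lemma monomial_eq' (a : Fin N →₀ ℕ) (c : R) :
    monomial a c = C (σ := Fin N) (R := R) c * ∏ l : Fin N, (X l : MvPowerSeries (Fin N) R) ^ (a l) := by
  rw [prod_monomial, ← monomial_zero_eq_C_apply, monomial_mul_monomial, zero_add, mul_one]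

section Ident

variable (D : MvPowerSeries (Fin (N + 1)) R →+* MvPowerSeries (Fin N) R) (i : Fin (N + 1))

lemma hom_X_succAbove
    (hX : ∀ j, D (X j) = ∑ l : Fin N, if i.succAbove l = j then X l else 0)
    (l : Fin N) : D (X (i.succAbove l)) = X l := by
  classical
  rw [hX]
  rw [Finset.sum_eq_single l]
  · rw [if_pos rfl]
  · intro l2 _ hne
    rw [if_neg (fun h => hne (Fin.succAbove_right_inj.mp h))]
  · intro h; exact absurd (Finset.mem_univ l) h

lemma hom_X_self
    (hX : ∀ j, D (X j) = ∑ l : Fin N, if i.succAbove l = j then X l else 0) :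
    D (X i) = 0 := by
  rw [hX]
  exact Finset.sum_eq_zero fun l _ => if_neg (Fin.succAbove_ne i l)

/-- image of a monomial under a substitution map killing `X i` -/
lemma hom_monomial
    (hC : ∀ r : R, D (C (R := R) r) = C (R := R) r)
    (hX : ∀ j, D (X j) = ∑ l : Fin N, if i.succAbove l = j then X l else 0)
    (a : Fin (N + 1) →₀ ℕ) (c : R) :
    D (monomial a c) = if a i = 0 then monomial (remF i a) c else 0 := by
  classical
  rw [monomial_eq', map_mul, map_prod, hC]
  simp_rw [map_pow]
  rw [Fin.prod_univ_succAbove (fun j => D (X j) ^ (a j)) i]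
  simp only [hom_X_succAbove D i hX, hom_X_self D i hX]
  rw [monomial_eq' (remF i a) c]
  by_cases h : a i = 0
  · rw [if_pos h, h, pow_zero, one_mul]
    exact congrArg _ (Finset.prod_congr rfl fun l _ => by rw [remF_apply])
  · rw [if_neg h, zero_pow h]
    ring

lemma hom_coeff_eq
    (hC : ∀ r : R, D (C (R := R) r) = C (R := R) r)
    (hX : ∀ j, D (X j) = ∑ l : Fin N, if i.succAbove l = j then X l else 0)
    (hI : ∀ (l : ℕ) (x : MvPowerSeries (Fin (N + 1)) R),
      x ∈ (Ideal.span (Set.range (X : Fin (N + 1) → MvPowerSeries (Fin (N + 1)) R))) ^ l →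
      D x ∈ (Ideal.span (Set.range (X : Fin N → MvPowerSeries (Fin N) R))) ^ l)
    (x : MvPowerSeries (Fin (N + 1)) R) (b : Fin N →₀ ℕ) :
    MvPowerSeries.coeff b (D x) = MvPowerSeries.coeff (insF i b) x := by
  classical
  set L : ℕ := deg b + 1 with hL
  set topB : Fin (N + 1) →₀ ℕ := Finsupp.equivFunOnFinite.symm (fun _ => L) with htopB
  have htopB_apply : ∀ j, topB j = L := fun j =>
    congrFun (Finsupp.equivFunOnFinite.right_inv _) j
  set A : Finset (Fin (N + 1) →₀ ℕ) := Finset.Iio topB with hA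
  have hcov : ∀ a : Fin (N + 1) →₀ ℕ, deg a < L → a ∈ A := by
    intro a ha
    rw [hA, Finset.mem_Iio]
    have hle : a ≤ topB := by
      intro j
      rw [htopB_apply]
      calc a j ≤ deg a := Finset.single_le_sum (fun _ _ => Nat.zero_le _) (Finset.mem_univ j)
      _ ≤ L := le_of_lt ha
    refine lt_of_le_of_ne hle ?_
    intro heq
    have := DFunLike.congr_fun heq (0 : Fin (N + 1))
    rw [htopB_apply] at this
    have hj : a (0 : Fin (N+1)) ≤ deg a :=
      Finset.single_le_sum (fun _ _ => Nat.zero_le _) (Finset.mem_univ _)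
    omega
  set P : MvPowerSeries (Fin (N + 1)) R :=
    ∑ a ∈ A, monomial a (MvPowerSeries.coeff a x) with hP
  have hcoeffP : ∀ a : Fin (N + 1) →₀ ℕ, a ∈ A →
      MvPowerSeries.coeff a P = MvPowerSeries.coeff a x := by
    intro a ha
    rw [hP, map_sum, Finset.sum_eq_single a]
    · rw [coeff_monomial_same]
    · intro a2 _ hne
      exact coeff_monomial_ne (Ne.symm hne) _
    · intro h; exact absurd ha h
  have hz : x - P ∈ (Ideal.span
      (Set.range (X : Fin (N + 1) → MvPowerSeries (Fin (N + 1)) R))) ^ L := by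
    refine mem_pow_of_coeff_eq_zero L _ fun a ha => ?_
    rw [map_sub, hcoeffP a (hcov a ha), sub_self]
  have hDz : MvPowerSeries.coeff b (D (x - P)) = 0 :=
    coeff_eq_zero_of_mem_pow L _ (hI L _ hz) b (by omega)
  have hxPz : x = P + (x - P) := by ring
  rw [hxPz, map_add, map_add, hDz, add_zero]
  -- now compute the polynomial part
  have hDP : MvPowerSeries.coeff b (D P) = MvPowerSeries.coeff (insF i b) P := by
    rw [hP, map_sum, map_sum, map_sum]
    refine Finset.sum_congr rfl fun a _ => ?_
    rw [hom_monomial D i hC hX]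
    by_cases h : a i = 0
    · rw [if_pos h, coeff_monomial, coeff_monomial]
      by_cases h2 : b = remF i a
      · rw [if_pos h2, if_pos]
        rw [h2, insF_remF h]
      · rw [if_neg h2, if_neg]
        intro heq
        exact h2 (by rw [← heq, remF_insF])
    · rw [if_neg h, map_zero, coeff_monomial, if_neg]
      intro heq
      exact h (by rw [← heq]; exact insF_self i b)
  have hzc : MvPowerSeries.coeff (insF i b) (x - P) = 0 :=
    coeff_eq_zero_of_mem_pow L _ hz _ (by rw [deg_insF]; omega)
  have h2 : MvPowerSeries.coeff (insF i b) (P + (x - P)) =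
      MvPowerSeries.coeff (insF i b) P := by
    rw [map_add, hzc, add_zero]
  rw [h2, hDP]

end Ident

lemma insF_zero (i : Fin (N + 1)) : insF i (0 : Fin N →₀ ℕ) = 0 := by
  ext j
  refine Fin.succAboveCases i ?_ ?_ j
  · rw [insF_self]; rfl
  · intro l
    rw [insF_succAbove]; rfl

lemma remF_zero (i : Fin (N + 1)) : remF i (0 : Fin (N + 1) →₀ ℕ) = 0 := by
  ext l
  rw [remF_apply]; rfl

/-- Gluing: if the candidate coefficients on the facets agree pairwise, there is a
power series restricting to all of them. -/
lemma glue (n : ℕ) (xt : Fin (n + 2) → MvPowerSeries (Fin (n + 1)) R)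
    (hpair : ∀ i j : Fin (n + 2), i < j → ∀ a : Fin (n + 2) →₀ ℕ, a i = 0 → a j = 0 →
      MvPowerSeries.coeff (remF i a) (xt i) = MvPowerSeries.coeff (remF j a) (xt j)) :
    ∃ y : MvPowerSeries (Fin (n + 2)) R,
      ∀ i b, MvPowerSeries.coeff (insF i b) y = MvPowerSeries.coeff b (xt i) := by
  classical
  have hpair' : ∀ i j : Fin (n + 2), i ≠ j → ∀ a : Fin (n + 2) →₀ ℕ, a i = 0 → a j = 0 →
      MvPowerSeries.coeff (remF i a) (xt i) = MvPowerSeries.coeff (remF j a) (xt j) := by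
    intro i j hne a hi hj
    rcases lt_or_gt_of_ne hne with h | h
    · exact hpair i j h a hi hj
    · exact (hpair j i h a hj hi).symm
  refine ⟨fun a => if h : ∃ i, a i = 0
      then MvPowerSeries.coeff (remF h.choose a) (xt h.choose) else 0, ?_⟩
  intro i b
  set a : Fin (n + 2) →₀ ℕ := insF i b with ha
  have hex : ∃ i', a i' = 0 := ⟨i, insF_self i b⟩
  have hcoeff : MvPowerSeries.coeff a (fun a => if h : ∃ i, a i = 0
      then MvPowerSeries.coeff (remF h.choose a) (xt h.choose) else 0 :
        MvPowerSeries (Fin (n + 2)) R) =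
      MvPowerSeries.coeff (remF hex.choose a) (xt hex.choose) := by
    show dite _ _ _ = _
    rw [dif_pos hex]
  rw [hcoeff]
  by_cases hsame : hex.choose = i
  · rw [hsame, ha, remF_insF]
  · rw [hpair' hex.choose i hsame a hex.choose_spec (insF_self i b), ha, remF_insF]



end Stmt8

open CategoryTheory Simplicial Opposite SSet

namespace Stmt8

/-- the identity `k`-simplex of `Δ[k]` -/
noncomputable abbrev stdId (k : ℕ) : (Δ[k] : SSet.{0}).obj (op (SimplexCategory.mk k)) :=
  stdSimplex.objEquiv.symm (𝟙 (SimplexCategory.mk k))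

lemma objEquiv_stdId (k : ℕ) : stdSimplex.objEquiv (stdId k) = 𝟙 (SimplexCategory.mk k) :=
  Equiv.apply_symm_apply _ _

/-- Generic: to solve a lifting problem against a boundary inclusion, it suffices to
produce a `k`-simplex restricting to `u` on the boundary and mapping to the correct
`k`-simplex downstairs. -/
lemma lift_of_simplex {X Y : SSet.{0}} {p : X ⟶ Y} {k : ℕ} {u : (∂Δ[k] : SSet) ⟶ X}
    {v : Δ[k] ⟶ Y} (sq : CommSq u (SSet.boundary k).ι p v)
    (yy : X.obj (op (SimplexCategory.mk k)))
    (hbd : ∀ (m : SimplexCategoryᵒᵖ) (s : (∂Δ[k] : SSet).obj m),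
      X.map (stdSimplex.objEquiv s.1).op yy = u.app m s)
    (hp : p.app _ yy = v.app _ (Stmt8.stdId k)) : sq.HasLift := by
  refine ⟨⟨⟨{ app := fun m => TypeCat.ofHom fun α => X.map (stdSimplex.objEquiv α).op yy
              naturality := ?_ }, ?_, ?_⟩⟩⟩
  · intro m₁ m₂ φ
    ext α
    show X.map (stdSimplex.objEquiv (Δ[k].map φ α)).op yy
      = X.map φ (X.map (stdSimplex.objEquiv α).op yy)
    have h1 : stdSimplex.objEquiv (Δ[k].map φ α)
        = φ.unop ≫ stdSimplex.objEquiv α := by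
      rw [stdSimplex.map_apply, Equiv.apply_symm_apply]
    rw [h1]
    have h2 : (φ.unop ≫ stdSimplex.objEquiv α).op
        = (stdSimplex.objEquiv α).op ≫ φ := rfl
    rw [h2, X.map_comp]
    rfl
  · apply NatTrans.ext
    funext m
    ext s
    exact hbd m s
  · apply NatTrans.ext
    funext m
    ext α
    show p.app m (X.map (stdSimplex.objEquiv α).op yy) = v.app m α
    have hnatp := ConcreteCategory.congr_hom (p.naturality (stdSimplex.objEquiv α).op) yy
    have hnatv := ConcreteCategory.congr_hom (v.naturality (stdSimplex.objEquiv α).op)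
      (Stmt8.stdId k)
    have hid : Δ[k].map (stdSimplex.objEquiv α).op (Stmt8.stdId k) = α := by
      rw [stdSimplex.map_apply]
      show (stdSimplex.objEquiv).symm
        ((stdSimplex.objEquiv α).op.unop ≫ stdSimplex.objEquiv (Stmt8.stdId k)) = α
      rw [Stmt8.objEquiv_stdId, Category.comp_id]
      exact Equiv.symm_apply_apply _ _
    simp only [types_comp_apply] at hnatp hnatv
    rw [hid] at hnatv
    show p.app (op (unop m)) (X.map ((stdSimplex.objEquiv α)).op yy) = v.app m α
    rw [hnatp, hp, ← hnatv]



lemma map_id_simplex {k : ℕ} (m : SimplexCategoryᵒᵖ) (α : (Δ[k] : SSet).obj m) :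
    (Δ[k] : SSet).map (stdSimplex.objEquiv α).op (Stmt8.stdId k) = α := by
  rw [stdSimplex.map_apply]
  show (stdSimplex.objEquiv).symm
    ((stdSimplex.objEquiv α).op.unop ≫ stdSimplex.objEquiv (Stmt8.stdId k)) = α
  rw [Stmt8.objEquiv_stdId, Category.comp_id]
  exact Equiv.symm_apply_apply _ _


end Stmt8

open CategoryTheory Simplicial Opposite SSet SimplexCategory

/-- Let `R∆_•` be the simplicial ring with `R∆_m = R⟦T₀, …, T_m⟧` and
structure maps `T_i ↦ ∑_{j ∈ σ⁻¹(i)} T_j` for `σ : [n] → [m]`.  (A simplicial object `S`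
in commutative rings is *the* simplicial ring `R∆_•` when it is equipped with degreewise
ring isomorphisms `e_k : R⟦T₀, …, T_k⟧ ≅ S([k])` under which the structure maps are
`R`-algebra homomorphisms sending `T_i` to `∑_{j ∈ σ⁻¹(i)} T_j` and respecting the
filtration by powers of the ideal `(T₀, …, T_k)`; these conditions characterize the
continuous substitution homomorphisms.)  Then the canonical map `R∆_• → R` to the
constant simplicial ring `R`, induced by `T_i ↦ 0` (the constant coefficient), is a
trivial Kan fibration of underlying simplicial sets, i.e. it has the right lifting
property against all boundary inclusions `∂Δ[k] ⟶ Δ[k]`. -/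
theorem stmt_8 (R : Type) [CommRing R]
    (S : SimplicialObject CommRingCat.{0})
    (e : ∀ k : ℕ, CommRingCat.of (MvPowerSeries (Fin (k + 1)) R) ≅
      S.obj (Opposite.op (SimplexCategory.mk k)))
    -- the structure maps are the substitutions `T_i ↦ ∑_{j ∈ σ⁻¹(i)} T_j` :
    (hmap : ∀ (n m : ℕ) (σ : SimplexCategory.mk n ⟶ SimplexCategory.mk m),
      (∀ r : R, ((e m).hom ≫ S.map σ.op ≫ (e n).inv) (MvPowerSeries.C (σ := Fin (m + 1)) (R := R) r) =
        MvPowerSeries.C (σ := Fin (n + 1)) (R := R) r) ∧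
      (∀ i : Fin (m + 1), ((e m).hom ≫ S.map σ.op ≫ (e n).inv) (MvPowerSeries.X i) =
        ∑ j : Fin (n + 1), if σ.toOrderHom j = i then MvPowerSeries.X j else 0) ∧
      (∀ (l : ℕ) (x : MvPowerSeries (Fin (m + 1)) R),
        x ∈ (Ideal.span (Set.range (MvPowerSeries.X : Fin (m + 1) → _))) ^ l →
        ((e m).hom ≫ S.map σ.op ≫ (e n).inv) x ∈
          (Ideal.span (Set.range (MvPowerSeries.X : Fin (n + 1) → _))) ^ l))
    -- the canonical augmentation `T_i ↦ 0` to the constant simplicial ring `R` :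
    (f : S ⟶ (Functor.const SimplexCategoryᵒᵖ).obj (CommRingCat.of R))
    (hf : ∀ k : ℕ, (e k).hom ≫ f.app (Opposite.op (SimplexCategory.mk k)) =
      CommRingCat.ofHom (MvPowerSeries.constantCoeff (σ := Fin (k + 1)) (R := R)))
    (k : ℕ) :
    HasLiftingProperty (SSet.boundary k).ι
      (((SimplicialObject.whiskering CommRingCat.{0} (Type 0)).obj (forget CommRingCat)).map f) := by
  constructor
  intro u v sq
  -- the simplicial sets involved
  let X : SSet := ((SimplicialObject.whiskering CommRingCat.{0} (Type 0)).obj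
    (forget CommRingCat)).obj S
  -- application of `f` through the isomorphisms `e`
  have hfapp : ∀ (m : ℕ) (z : MvPowerSeries (Fin (m + 1)) R),
      f.app (op (SimplexCategory.mk m)) ((e m).hom z) =
        MvPowerSeries.constantCoeff (σ := Fin (m + 1)) (R := R) z := by
    intro m z
    show ((e m).hom ≫ f.app (op (SimplexCategory.mk m))) z = _
    rw [hf m]
    rfl
  have hehinv : ∀ (m : ℕ) (z : S.obj (op (SimplexCategory.mk m))),
      (e m).hom ((e m).inv z) = z := by
    intro m z
    show ((e m).inv ≫ (e m).hom) z = z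
    rw [Iso.inv_hom_id]
    rfl
  -- constancy of `v`
  set r₀ : R := v.app (op (SimplexCategory.mk k)) (Stmt8.stdId k) with hr₀
  have hv : ∀ (m : SimplexCategoryᵒᵖ) (α : (Δ[k] : SSet).obj m), v.app m α = r₀ := by
    intro m α
    have hnatv := ConcreteCategory.congr_hom (v.naturality (stdSimplex.objEquiv α).op)
      (Stmt8.stdId k)
    simp only [types_comp_apply] at hnatv
    rw [Stmt8.map_id_simplex] at hnatv
    show v.app (op (unop m)) α = r₀
    rw [hnatv]
    rfl
  -- identification of the face maps with the coefficient substitutions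
  have hD : ∀ (m : ℕ) (i : Fin (m + 2)) (z : MvPowerSeries (Fin (m + 2)) R)
      (b : Fin (m + 1) →₀ ℕ),
      MvPowerSeries.coeff b ((e m).inv (S.map (SimplexCategory.δ i).op ((e (m + 1)).hom z)))
        = MvPowerSeries.coeff (Stmt8.insF i b) z := by
    intro m i z b
    obtain ⟨hC, hX, hI⟩ := hmap m (m + 1) (SimplexCategory.δ i)
    refine Stmt8.hom_coeff_eq
      (((e (m + 1)).hom ≫ S.map (SimplexCategory.δ i).op ≫ (e m).inv :
        CommRingCat.of (MvPowerSeries (Fin (m + 2)) R) ⟶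
          CommRingCat.of (MvPowerSeries (Fin (m + 1)) R)).hom)
      i hC ?_ hI z b
    intro j
    exact hX j
  rcases k with _ | n
  · -- dimension 0 : the boundary is empty
    refine Stmt8.lift_of_simplex sq ((e 0).hom (MvPowerSeries.C (σ := Fin 1) (R := R) r₀)) ?_ ?_
    · intro m s
      exfalso
      refine s.2 fun i => ⟨0, ?_⟩
      exact Subsingleton.elim (α := Fin 1) _ _
    · show f.app _ ((e 0).hom (MvPowerSeries.C (σ := Fin 1) (R := R) r₀)) = _
      rw [hfapp 0]
      exact MvPowerSeries.constantCoeff_C r₀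
  · -- positive dimension
    -- the faces of the boundary
    have hns : ∀ i : Fin (n + 2),
        ¬ Function.Surjective (stdSimplex.asOrderHom ((stdSimplex.objEquiv
          (m := op (SimplexCategory.mk n))).symm (SimplexCategory.δ i))) := by
      intro i hsurj
      obtain ⟨x, hx⟩ := hsurj i
      exact Fin.succAbove_ne i x hx
    set face : ∀ i : Fin (n + 2), (∂Δ[n + 1] : SSet).obj (op (SimplexCategory.mk n)) :=
      fun i => ⟨(stdSimplex.objEquiv).symm (SimplexCategory.δ i), hns i⟩ with hface_def
    set xs : Fin (n + 2) → S.obj (op (SimplexCategory.mk n)) :=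
      fun i => u.app _ (face i) with hxs
    set xt : Fin (n + 2) → MvPowerSeries (Fin (n + 1)) R :=
      fun i => (e n).inv (xs i) with hxt
    have hxs_eq : ∀ i, (e n).hom (xt i) = xs i := fun i => hehinv n (xs i)
    -- constant coefficients
    have hconst : ∀ i, MvPowerSeries.constantCoeff (σ := Fin (n + 1)) (R := R) (xt i) = r₀ := by
      intro i
      have hw := ConcreteCategory.congr_hom (NatTrans.congr_app sq.w (op (SimplexCategory.mk n))) (face i)
      simp only [NatTrans.comp_app, types_comp_apply] at hw
      have hl : f.app (op (SimplexCategory.mk n)) (xs i) = r₀ := by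
        have := hv (op (SimplexCategory.mk n)) ((face i).1)
        exact hw.trans this
      rw [← hxs_eq i, hfapp n] at hl
      exact hl
    -- pairwise compatibility of the faces
    have hpair : ∀ i j : Fin (n + 2), i < j → ∀ a : Fin (n + 2) →₀ ℕ,
        a i = 0 → a j = 0 →
        MvPowerSeries.coeff (Stmt8.remF i a) (xt i)
          = MvPowerSeries.coeff (Stmt8.remF j a) (xt j) := by
      intro i j hij a hai haj
      by_cases hn : n = 0
      · subst hn
        have hi0 : i = 0 := by
          apply Fin.ext
          rw [Fin.val_zero]
          have := hij
          rw [Fin.lt_def] at this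
          omega
        have hj1 : j = 1 := by
          apply Fin.ext
          rw [Fin.val_one]
          have := hij
          rw [Fin.lt_def] at this
          omega
        subst hi0
        subst hj1
        have ha : a = 0 := by
          ext l
          fin_cases l
          · exact hai
          · exact haj
        subst ha
        rw [Stmt8.remF_zero, Stmt8.remF_zero,
          MvPowerSeries.coeff_zero_eq_constantCoeff_apply,
          MvPowerSeries.coeff_zero_eq_constantCoeff_apply, hconst, hconst]
      · obtain ⟨m, rfl⟩ : ∃ m, n = m + 1 := ⟨n - 1, by omega⟩
        have hilast : i ≠ Fin.last (m + 2) := by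
          intro h
          rw [h] at hij
          exact absurd hij (Fin.not_lt.mpr (Fin.le_last j))
        have hj0 : j ≠ 0 := by
          intro h
          rw [h] at hij
          exact absurd hij (Fin.not_lt_zero i)
        set i' : Fin (m + 2) := i.castPred hilast with hi'
        set j' : Fin (m + 2) := j.pred hj0 with hj'
        have hii' : i'.castSucc = i := Fin.castSucc_castPred i hilast
        have hjj' : j'.succ = j := Fin.succ_pred j hj0
        have hle : i' ≤ j' := by
          rw [Fin.le_def]
          have h1 : (i' : ℕ) = (i : ℕ) := rfl
          have h2 : (j' : ℕ) = (j : ℕ) - 1 := rfl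
          have := hij
          rw [Fin.lt_def] at this
          omega
        have hδ : SimplexCategory.δ i' ≫ SimplexCategory.δ j
            = SimplexCategory.δ j' ≫ SimplexCategory.δ i := by
          rw [← hjj', ← hii']
          exact SimplexCategory.δ_comp_δ hle
        -- the two restrictions agree
        have hsimplex : (∂Δ[m + 2] : SSet).map (SimplexCategory.δ i').op (face j)
            = (∂Δ[m + 2] : SSet).map (SimplexCategory.δ j').op (face i) := by
          apply Subtype.ext
          show (Δ[m + 2] : SSet).map (SimplexCategory.δ i').op ((face j).1)
            = (Δ[m + 2] : SSet).map (SimplexCategory.δ j').op ((face i).1)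
          rw [stdSimplex.map_apply, stdSimplex.map_apply]
          have harg : (SimplexCategory.δ i').op.unop ≫ (stdSimplex.objEquiv) ((face j).1)
              = (SimplexCategory.δ j').op.unop ≫ (stdSimplex.objEquiv) ((face i).1) := by
            show SimplexCategory.δ i' ≫ (stdSimplex.objEquiv.{0})
                ((stdSimplex.objEquiv.{0}).symm (SimplexCategory.δ j))
              = SimplexCategory.δ j' ≫ (stdSimplex.objEquiv.{0})
                ((stdSimplex.objEquiv.{0}).symm (SimplexCategory.δ i))
            rw [Equiv.apply_symm_apply, Equiv.apply_symm_apply]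
            exact hδ
          rw [harg]
        have hnat1 := ConcreteCategory.congr_hom (u.naturality (SimplexCategory.δ i').op) (face j)
        have hnat2 := ConcreteCategory.congr_hom (u.naturality (SimplexCategory.δ j').op) (face i)
        simp only [types_comp_apply] at hnat1 hnat2
        have hw : S.map (SimplexCategory.δ i').op (xs j)
            = S.map (SimplexCategory.δ j').op (xs i) := by
          show X.map (SimplexCategory.δ i').op (u.app (op (SimplexCategory.mk (m + 1))) (face j))
            = X.map (SimplexCategory.δ j').op (u.app (op (SimplexCategory.mk (m + 1))) (face i))
          rw [← hnat1, ← hnat2, hsimplex]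
        have hrel : ∀ c : Fin (m + 1) →₀ ℕ,
            MvPowerSeries.coeff (Stmt8.insF i' c) (xt j)
              = MvPowerSeries.coeff (Stmt8.insF j' c) (xt i) := by
          intro c
          rw [← hD m i' (xt j) c, ← hD m j' (xt i) c, hxs_eq, hxs_eq, hw]
        -- Finsupp bookkeeping
        have hsuccj : j.succAbove i' = i := by
          rw [Fin.succAbove_of_castSucc_lt _ _ (by rw [hii']; exact hij), hii']
        have hsucci : i.succAbove j' = j := by
          rw [Fin.succAbove_of_le_castSucc, hjj']
          rw [Fin.le_def]
          have h2 : ((j'.castSucc) : ℕ) = (j : ℕ) - 1 := rfl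
          have := hij
          rw [Fin.lt_def] at this
          omega
        set c : Fin (m + 1) →₀ ℕ := Stmt8.remF i' (Stmt8.remF j a) with hc
        have hremj_i' : (Stmt8.remF j a) i' = 0 := by
          rw [Stmt8.remF_apply, hsuccj, hai]
        have hremi_j' : (Stmt8.remF i a) j' = 0 := by
          rw [Stmt8.remF_apply, hsucci, haj]
        have hclaim1 : Stmt8.insF i' c = Stmt8.remF j a := by
          rw [hc]
          exact Stmt8.insF_remF hremj_i'
        have hcomp : ∀ l : Fin (m + 1), i.succAbove (j'.succAbove l)
            = j.succAbove (i'.succAbove l) := by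
          intro l
          have := congrArg (fun (q : SimplexCategory.mk m ⟶ SimplexCategory.mk (m + 2)) =>
            q.toOrderHom l) hδ
          simpa [SimplexCategory.δ, SimplexCategory.comp_toOrderHom] using this.symm
        have hswap : Stmt8.remF j' (Stmt8.remF i a) = c := by
          ext l
          rw [hc, Stmt8.remF_apply, Stmt8.remF_apply, Stmt8.remF_apply, Stmt8.remF_apply,
            hcomp l]
        have hclaim2 : Stmt8.insF j' c = Stmt8.remF i a := by
          rw [← hswap]
          exact Stmt8.insF_remF hremi_j'
        calc MvPowerSeries.coeff (Stmt8.remF i a) (xt i)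
            = MvPowerSeries.coeff (Stmt8.insF j' c) (xt i) := by rw [hclaim2]
          _ = MvPowerSeries.coeff (Stmt8.insF i' c) (xt j) := (hrel c).symm
          _ = MvPowerSeries.coeff (Stmt8.remF j a) (xt j) := by rw [hclaim1]
    -- glue
    obtain ⟨yt, hyt⟩ := Stmt8.glue n xt hpair
    have hface_cond : ∀ i : Fin (n + 2),
        S.map (SimplexCategory.δ i).op ((e (n + 1)).hom yt) = xs i := by
      intro i
      have h1 : (e n).inv (S.map (SimplexCategory.δ i).op ((e (n + 1)).hom yt)) = xt i := by
        apply MvPowerSeries.ext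
        intro b
        rw [hD n i yt b]
        exact hyt i b
      have := congrArg ((e n).hom) h1
      rwa [hehinv, hxs_eq] at this
    refine Stmt8.lift_of_simplex sq ((e (n + 1)).hom yt) ?_ ?_
    · rintro m ⟨α, hα⟩
      obtain ⟨i, hi⟩ : ∃ i : Fin (n + 2), ∀ x,
          (stdSimplex.objEquiv α).toOrderHom x ≠ i := by
        have : ¬ Function.Surjective (stdSimplex.asOrderHom α) := hα
        rw [Function.Surjective] at this
        push_neg at this
        obtain ⟨i, hi⟩ := this
        exact ⟨i, fun x h => hi x h⟩
      obtain ⟨θ, hθ⟩ := SimplexCategory.eq_comp_δ_of_not_surjective'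
        (stdSimplex.objEquiv α) i hi
      have hs_eq : (⟨α, hα⟩ : (∂Δ[n + 1] : SSet).obj m)
          = (∂Δ[n + 1] : SSet).map θ.op (face i) := by
        apply Subtype.ext
        show α = (Δ[n + 1] : SSet).map θ.op ((face i).1)
        rw [stdSimplex.map_apply]
        have : θ.op.unop ≫ (stdSimplex.objEquiv.{0}) ((face i).1) = θ ≫ SimplexCategory.δ i := by
          show θ ≫ (stdSimplex.objEquiv.{0})
            ((stdSimplex.objEquiv.{0}).symm (SimplexCategory.δ i)) = θ ≫ SimplexCategory.δ i
          rw [Equiv.apply_symm_apply]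
        rw [this, ← hθ]
        exact (Equiv.symm_apply_apply _ _).symm
      have hnat : u.app m ((∂Δ[n + 1] : SSet).map θ.op (face i)) = X.map θ.op (xs i) :=
        ConcreteCategory.congr_hom (u.naturality θ.op) (face i)
      conv_rhs => rw [hs_eq]
      rw [hnat]
      show X.map (stdSimplex.objEquiv α).op ((e (n + 1)).hom yt)
        = X.map θ.op (xs i)
      have hXmap : (stdSimplex.objEquiv α) = θ ≫ SimplexCategory.δ i := hθ
      rw [hXmap]
      have : ((θ ≫ SimplexCategory.δ i).op : op (SimplexCategory.mk (n + 1)) ⟶ m)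
          = (SimplexCategory.δ i).op ≫ θ.op := rfl
      rw [this, X.map_comp]
      show X.map θ.op (X.map (SimplexCategory.δ i).op ((e (n + 1)).hom yt)) = _
      have : X.map (SimplexCategory.δ i).op ((e (n + 1)).hom yt) = xs i := hface_cond i
      rw [this]
    · show f.app _ ((e (n + 1)).hom yt) = _
      rw [hfapp (n + 1)]
      have h0 : MvPowerSeries.constantCoeff (σ := Fin (n + 2)) (R := R) yt
          = MvPowerSeries.coeff (Stmt8.insF 0 0) yt := by
        rw [Stmt8.insF_zero, MvPowerSeries.coeff_zero_eq_constantCoeff_apply]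
      rw [h0, hyt 0 0]
      show MvPowerSeries.coeff 0 (xt 0) = _
      rw [MvPowerSeries.coeff_zero_eq_constantCoeff_apply, hconst 0]
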